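/- Let H be a Hilbert space, T : H → H nonexpansive, M = I - T, μ = 1/2. Define sequences by y^{k+1} = (I - μM)x^k and x^{k+1} = y^{k+1} + (k/(k+2))(y^{k+1} - y^k) - (k/(k+2))(y^k - x^{k-1}), started from x^0 = y^0 = x^{-1}. Then x^n = (1/(n+1))x^0 + (n/(n+1))T x^{n-1} for all n ≥ 1; that is, Kim's inertial iteration coincides with Halpern's iteration with stepsize β_n = n/(n+1). -/
import Mathlib


/-- In a Hilbert space, Kim's inertial iteration for the ½-cocoercive
operator M = I - T with μ = 1/2, namely y^{k+1} = (I-μM)x^k and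
x^{k+1} = y^{k+1} + (k/(k+2))(y^{k+1} - y^k) - (k/(k+2))(y^k - x^{k-1}), started from
x⁰ = y⁰ = x^{-1}, coincides with Halpern's iteration
x^n = (1/(n+1))x⁰ + (n/(n+1))T x^{n-1}.  (Here `x (k-1)` with truncated subtraction
encodes the convention x^{-1} = x⁰.) -/
theorem stmt13 {H : Type*} [NormedAddCommGroup H] [InnerProductSpace ℝ H]
    [CompleteSpace H]
    (T : H → H) (hT : ∀ u v : H, ‖T u - T v‖ ≤ ‖u - v‖)
    (x y : ℕ → H) (hinit : y 0 = x 0)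
    (hy : ∀ k : ℕ, y (k+1) = x k - (1/2 : ℝ) • (x k - T (x k)))
    (hx : ∀ k : ℕ, x (k+1) = y (k+1) + ((k : ℝ)/((k : ℝ) + 2)) • (y (k+1) - y k)
      - ((k : ℝ)/((k : ℝ) + 2)) • (y k - x (k-1))) :
    ∀ n : ℕ, 1 ≤ n →
      x n = (1/((n : ℝ) + 1)) • x 0 + ((n : ℝ)/((n : ℝ) + 1)) • T (x (n-1)) := by
  intro n hn
  induction n with
  | zero => omega
  | succ m ih =>
    rcases Nat.eq_zero_or_pos m with hm | hm
    · subst hm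
      rw [hx 0, hy 0, hinit]
      norm_num
      module
    · have ihm := ih hm
      have hm1 : m - 1 + 1 = m := Nat.succ_pred_eq_of_pos hm
      have hyy : y m = x (m-1) - (1/2:ℝ) • (x (m-1) - T (x (m-1))) := by
        have := hy (m-1); rwa [hm1] at this
      rw [hx m, hy m, hyy]
      simp only [Nat.add_sub_cancel]
      rw [ihm]
      have h1 : ((m:ℝ)+1) ≠ 0 := by positivity
      have h2 : ((m:ℝ)+2) ≠ 0 := by positivity
      push_cast
      match_scalars <;> field_simp <;> ring
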